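/- Let G=(V,E) be a finite undirected graph, fix s ∈ V, and let D be the directed graph on V whose arcs are: both orientations of every edge of G, together with an arc from v to s for every v ∈ V∖{s}. Suppose T ⊆ V∖{s} and there exist two distinct vertices u,v ∈ V∖T such that no vertex of V∖T has, in the subgraph of D induced by V∖T, directed paths to both u and v. Then the graph obtained from G by deleting the vertices in T has at least three connected components. -/

import Mathlib

/-- let `D` be obtained from `G` by bidirecting every edge and adding an
arc from every vertex `v ≠ s` to `s`. If `T ⊆ V ∖ {s}` and there are distinct
`u, v ∉ T` such that no vertex of `D - T` has directed paths (in `D - T`) to both `u`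
and `v`, then `G - T` has at least three connected components. -/
theorem stmt_8 {V : Type*} [Fintype V] (G : SimpleGraph V) (s : V)
    (E : V → V → Prop) (hE : E = fun u v => G.Adj u v ∨ (v = s ∧ u ≠ s))
    (T : Set V) (hT : s ∉ T)
    (u v : V) (hu : u ∉ T) (hv : v ∉ T) (huv : u ≠ v)
    (hsep : ∀ w : V, w ∉ T →
      ¬ (Relation.ReflTransGen (fun x y => E x y ∧ x ∉ T ∧ y ∉ T) w u ∧
         Relation.ReflTransGen (fun x y => E x y ∧ x ∉ T ∧ y ∉ T) w v)) :
    ∃ c₁ c₂ c₃ : (G.induce (Tᶜ : Set V)).ConnectedComponent,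
      c₁ ≠ c₂ ∧ c₁ ≠ c₃ ∧ c₂ ≠ c₃ := by
  subst hE
  set R : V → V → Prop := fun x y => (G.Adj x y ∨ (y = s ∧ x ≠ s)) ∧ x ∉ T ∧ y ∉ T with hR
  -- reachability in the induced graph gives an R-path
  have lift : ∀ (a b : (Tᶜ : Set V)), (G.induce (Tᶜ : Set V)).Reachable a b →
      Relation.ReflTransGen R (a : V) (b : V) := by
    intro a b hab
    rw [SimpleGraph.reachable_iff_reflTransGen] at hab
    exact Relation.ReflTransGen.lift (p := R) Subtype.val
      (fun x y hxy => ⟨Or.inl hxy, x.2, y.2⟩) _ _ hab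
  have hus : u ≠ s := by
    intro h
    exact hsep v hv ⟨Relation.ReflTransGen.single
      ⟨Or.inr ⟨h, fun hvs => huv (h.trans hvs.symm)⟩, hv, hu⟩,
      Relation.ReflTransGen.refl⟩
  have hvs : v ≠ s := by
    intro h
    exact hsep u hu ⟨Relation.ReflTransGen.refl,
      Relation.ReflTransGen.single ⟨Or.inr ⟨h, fun hus' => huv (hus'.trans h.symm)⟩, hu, hv⟩⟩
  refine ⟨(G.induce (Tᶜ : Set V)).connectedComponentMk ⟨u, hu⟩,
    (G.induce (Tᶜ : Set V)).connectedComponentMk ⟨v, hv⟩,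
    (G.induce (Tᶜ : Set V)).connectedComponentMk ⟨s, hT⟩, ?_, ?_, ?_⟩
  · intro h
    have := lift _ _ (SimpleGraph.ConnectedComponent.eq.mp h)
    exact hsep u hu ⟨Relation.ReflTransGen.refl, this⟩
  · intro h
    have hsu := lift _ _ (SimpleGraph.ConnectedComponent.eq.mp h.symm)
    exact hsep v hv ⟨(Relation.ReflTransGen.single
      ⟨Or.inr ⟨rfl, hvs⟩, hv, hT⟩).trans hsu, Relation.ReflTransGen.refl⟩
  · intro h
    have hsv := lift _ _ (SimpleGraph.ConnectedComponent.eq.mp h.symm)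
    exact hsep u hu ⟨Relation.ReflTransGen.refl,
      (Relation.ReflTransGen.single ⟨Or.inr ⟨rfl, hus⟩, hu, hT⟩).trans hsv⟩
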